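/- With g = a ⋉ n (a, n abelian, [a,n] = n) of even total dimension m + n with m < n, for every closed 1-form θ ∈ Λ¹(g*) and every non-degenerate 2-form ω ∈ Λ²(g*) satisfying dω = θ ∧ ω, the twisted cohomology class [ω]_θ ∈ H²_θ(g) is nonzero. -/

import Mathlib

open scoped BigOperators

/-- The Chevalley–Eilenberg differential (trivial coefficients), at the level of functions
on tuples: `(dα)(x₀,…,x_k) = ∑_{i<j} (−1)^{i+j} α(⁅x_i,x_j⁆, x₀,…,x̂_i,…,x̂_j,…,x_k)`. -/
noncomputable def ceDiff (L : Type*) [LieRing L] :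
    ∀ (k : ℕ), ((Fin k → L) → ℝ) → ((Fin (k + 1) → L) → ℝ)
  | 0, _ => 0
  | (m + 1), α => fun x =>
      ∑ j : Fin (m + 2), ∑ i : Fin (m + 2),
        if hij : (i : ℕ) < (j : ℕ) then
          (-1 : ℝ) ^ ((i : ℕ) + (j : ℕ)) *
            α (Fin.cons ⁅x i, x j⁆ (fun m' : Fin m =>
              x (j.succAbove
                ((⟨(i : ℕ), lt_of_lt_of_le hij (Nat.lt_succ_iff.mp j.isLt)⟩ :
                  Fin (m + 1)).succAbove m'))))
        else 0

/-- Wedge product with a 1-form, at the level of functions on tuples: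
`(θ ∧ α)(x₀,…,x_k) = ∑_i (−1)^i θ(x_i) α(x₀,…,x̂_i,…,x_k)`. -/
noncomputable def oneWedge (L : Type*) {k : ℕ} (θ : L → ℝ) (α : (Fin k → L) → ℝ) :
    (Fin (k + 1) → L) → ℝ :=
  fun x => ∑ i : Fin (k + 1), (-1 : ℝ) ^ (i : ℕ) * θ (x i) * α (i.removeNth x)

/-- A `k`-form has pure bidegree `(p, k−p)` with respect to a decomposition `V = A ⊕ N`
iff it vanishes on every tuple of vectors from `A ∪ N` in which the number of entries
belonging to `A` is not `p`. -/
def HasPureADegree {L : Type*} [AddCommGroup L] [Module ℝ L]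
    (A N : Submodule ℝ L) {k : ℕ} (α : (Fin k → L) → ℝ) (p : ℕ) : Prop :=
  ∀ x : Fin k → L, (∀ i, x i ∈ A ∨ x i ∈ N) →
    Nat.card {i : Fin k // x i ∈ A} ≠ p → α x = 0

/-- For `g = a ⋉ n` (`a`, `n` abelian, `[a,n] = n`) of even total dimension
`m + n` with `m = dim a < dim n = n`, every closed 1-form `θ` and non-degenerate 2-form
`ω` with `dω = θ ∧ ω` give a nonzero twisted cohomology class `[ω]_θ ∈ H²_θ(g)`:
`ω` is not `d_θ`-exact. -/
lemma upd0 {L : Type*} [AddCommGroup L] (a b c : L) :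
    Function.update ![a, b] 0 c = ![c, b] := by
  funext i; fin_cases i <;> simp

lemma upd1 {L : Type*} [AddCommGroup L] (a b c : L) :
    Function.update ![a, b] 1 c = ![a, c] := by
  funext i; fin_cases i <;> simp

lemma omega_addL {L : Type*} [AddCommGroup L] [Module ℝ L]
    (ω : AlternatingMap ℝ L ℝ (Fin 2)) (x y u : L) :
    ω ![x + y, u] = ω ![x, u] + ω ![y, u] := by
  have h := ω.map_update_add ![x, u] 0 x y
  rwa [upd0, upd0, upd0] at h

lemma omega_addR {L : Type*} [AddCommGroup L] [Module ℝ L]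
    (ω : AlternatingMap ℝ L ℝ (Fin 2)) (u x y : L) :
    ω ![u, x + y] = ω ![u, x] + ω ![u, y] := by
  have h := ω.map_update_add ![u, x] 1 x y
  rwa [upd1, upd1, upd1] at h

lemma omega_smulL {L : Type*} [AddCommGroup L] [Module ℝ L]
    (ω : AlternatingMap ℝ L ℝ (Fin 2)) (c : ℝ) (x u : L) :
    ω ![c • x, u] = c * ω ![x, u] := by
  have h := ω.map_update_smul ![x, u] 0 c x
  rwa [upd0, upd0] at h

lemma omega_diag {L : Type*} [AddCommGroup L] [Module ℝ L]
    (ω : AlternatingMap ℝ L ℝ (Fin 2)) (x : L) : ω ![x, x] = 0 :=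
  ω.map_eq_zero_of_eq ![x, x] (i := 0) (j := 1) rfl (by decide)

lemma omega_swap {L : Type*} [AddCommGroup L] [Module ℝ L]
    (ω : AlternatingMap ℝ L ℝ (Fin 2)) (x y : L) :
    ω ![x, y] = -ω ![y, x] := by
  have h0 : ω ![x + y, x + y] = 0 := omega_diag ω (x + y)
  rw [omega_addR, omega_addL, omega_addL, omega_diag, omega_diag] at h0
  linarith

theorem lcs_class_nonzero_in_twisted_cohomology
    {L : Type*} [LieRing L] [LieAlgebra ℝ L] [FiniteDimensional ℝ L]
    (A N : Submodule ℝ L) (hc : IsCompl A N)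
    (hA : ∀ x ∈ A, ∀ y ∈ A, ⁅x, y⁆ = (0 : L))
    (hN : ∀ x ∈ N, ∀ y ∈ N, ⁅x, y⁆ = (0 : L))
    (hmix : ∀ x ∈ A, ∀ y ∈ N, ⁅x, y⁆ ∈ N)
    (hspan : Submodule.span ℝ {z : L | ∃ x ∈ A, ∃ y ∈ N, z = ⁅x, y⁆} = N)
    (m n : ℕ) (hm : Module.finrank ℝ A = m) (hn : Module.finrank ℝ N = n)
    (hmn : m < n) (heven : Even (m + n))
    (θ : Module.Dual ℝ L) (hθclosed : ∀ x y : L, θ ⁅x, y⁆ = 0)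
    (ω : AlternatingMap ℝ L ℝ (Fin 2))
    (hnondeg : ∀ v : L, v ≠ 0 → ∃ w : L, ω ![v, w] ≠ 0)
    (hlcs : ceDiff L 2 ⇑ω = oneWedge L (⇑θ) ⇑ω) :
    ∀ η : Module.Dual ℝ L,
      ceDiff L 1 (fun x => η (x 0)) - oneWedge L (⇑θ) (fun x => η (x 0)) ≠ ⇑ω := by
  intro η heq
  -- θ vanishes on N
  have hθN : ∀ v ∈ N, θ v = 0 := by
    intro v hv
    rw [← hspan] at hv
    refine Submodule.span_induction ?_ (map_zero θ) ?_ ?_ hv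
    · rintro z ⟨x, hx, y, hy, rfl⟩; exact hθclosed x y
    · intro a b _ _ ha hb; rw [map_add, ha, hb, add_zero]
    · intro c a _ ha; rw [map_smul, ha, smul_zero]
  -- N is ω-isotropic
  have hiso : ∀ u ∈ N, ∀ v ∈ N, ω ![u, v] = 0 := by
    intro u hu v hv
    have h := congrFun heq ![u, v]
    simp only [Pi.sub_apply] at h
    have h1 : ceDiff L 1 (fun x => η (x 0)) ![u, v] = -η ⁅u, v⁆ := by
      simp [ceDiff, Fin.sum_univ_two]
    have h2 : oneWedge L (⇑θ) (fun x => η (x 0)) ![u, v]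
        = θ u * η v - θ v * η u := by
      simp [oneWedge, Fin.sum_univ_two, Fin.removeNth]; ring
    rw [h1, h2, hN u hu v hv, map_zero, hθN u hu, hθN v hv] at h
    simp at h
    exact h.symm
  -- map N → Dual A, u ↦ ω(·, u)
  let T : N →ₗ[ℝ] Module.Dual ℝ A :=
    { toFun := fun u =>
        { toFun := fun a => ω ![(a : L), (u : L)]
          map_add' := fun a b => omega_addL ω a b u
          map_smul' := fun c a => omega_smulL ω c a u }
      map_add' := fun u v => by
        ext a; exact omega_addR ω a u v
      map_smul' := fun c u => by
        ext a
        have h := ω.map_update_smul ![(a : L), (u : L)] 1 c u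
        rw [upd1, upd1] at h
        simpa using h }
  have hTnotinj : ¬ Function.Injective T := by
    intro hinj
    have hle := LinearMap.finrank_le_finrank_of_injective hinj
    rw [Subspace.dual_finrank_eq, hm, hn] at hle
    omega
  rw [← LinearMap.ker_eq_bot] at hTnotinj
  obtain ⟨u, huker, hune⟩ := Submodule.exists_mem_ne_zero_of_ne_bot hTnotinj
  have hu0 : (u : L) ≠ 0 := fun h => hune (Subtype.ext h)
  -- ω(v, u) = 0 for all v
  have hall : ∀ v : L, ω ![v, (u : L)] = 0 := by
    intro v
    obtain ⟨a, ha, b, hb, rfl⟩ := Submodule.mem_sup.mp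
      (by rw [hc.sup_eq_top]; trivial : v ∈ A ⊔ N)
    rw [omega_addL]
    have hA0 : ω ![a, (u : L)] = 0 := by
      have := LinearMap.congr_fun (LinearMap.mem_ker.mp huker) ⟨a, ha⟩
      exact this
    rw [hA0, hiso b hb u u.2, add_zero]
  obtain ⟨w, hw⟩ := hnondeg (u : L) hu0
  exact hw (by rw [omega_swap, hall w, neg_zero])
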